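/- arXiv:1501.03284 — 3 statements merged into one kernel-verified Lean document; each statement's English description precedes it below -/
import Mathlib

section
/- Let F be a fraction of D with counting vector Y and coefficients c_α. For each i = 1,...,m, define H_i = Σ_{‖α‖_0 = i} Re(H^α), summing over all α ∈ L with exactly i nonzero components. Then Σ_{‖α‖_0 = i} |c_α|² = (1/(#D)²)·Yᵀ H_i Y, and hence the i-th component of the generalized wordlength pattern satisfies α_i(F) = (1/(#F)²)·Yᵀ H_i Y. -/
set_option maxHeartbeats 1000000


open Finset

/-- The monomial function `X^α` on the full factorial design, identifying the point of
`D_1 × ⋯ × D_m` with exponents `ζ ∈ Z_{n_1} × ⋯ × Z_{n_m}` with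
`(exp(2πi ζ_1/n_1), …, exp(2πi ζ_m/n_m))`: `X^α(ζ) = ζ_1^{α_1} ⋯ ζ_m^{α_m}`. -/
noncomputable def Xmon {m : ℕ} (n : Fin m → ℕ) (α ζ : ∀ j, ZMod (n j)) : ℂ :=
  ∏ j, Complex.exp (2 * Real.pi * Complex.I *
    (((α j).val : ℂ) * ((ζ j).val : ℂ)) / (n j))

/-- The matrix `H^α` with entries `H^α_{ζτ} = conj(X^α(ζ))·X^α(τ)`. -/
noncomputable def Hmat {m : ℕ} (n : Fin m → ℕ) (α : ∀ j, ZMod (n j)) :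
    Matrix (∀ j, ZMod (n j)) (∀ j, ZMod (n j)) ℂ :=
  Matrix.of fun ζ τ => (starRingEnd ℂ) (Xmon n α ζ) * Xmon n α τ

/-- The number of nonzero components of `α` (the "word length" `‖α‖₀`). -/
def wt {m : ℕ} (n : Fin m → ℕ) (α : ∀ j, ZMod (n j)) : ℕ :=
  (Finset.univ.filter fun j => α j ≠ 0).card

/-- With `H_i = ∑_{‖α‖₀ = i} Re(H^α)`, one has
`∑_{‖α‖₀ = i} |c_α|² = (1/(#D)²)·Yᵀ H_i Y`, and hence the `i`-th component of the
generalized wordlength pattern satisfies `α_i(F) = (1/(#F)²)·Yᵀ H_i Y`. -/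
theorem stmt_12 (m : ℕ) (n : Fin m → ℕ) (hn : ∀ j, 1 ≤ n j) [∀ j, NeZero (n j)]
    (Y : (∀ j, ZMod (n j)) → ℕ) (hF : 0 < ∑ ζ, Y ζ)
    (c : (∀ j, ZMod (n j)) → ℂ)
    (hc : ∀ α, c α = (1 / ∏ j, (n j : ℂ)) *
      ∑ ζ, (Y ζ : ℂ) * (starRingEnd ℂ) (Xmon n α ζ))
    (i : ℕ) (hi1 : 1 ≤ i) (hi2 : i ≤ m) :
    ((∑ α ∈ Finset.univ.filter (fun α => wt n α = i), ‖c α‖ ^ 2) =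
      (1 / ((∏ j, n j : ℕ) : ℝ) ^ 2) *
        ∑ ζ, ∑ τ, (Y ζ : ℝ) *
          (∑ α ∈ Finset.univ.filter (fun α => wt n α = i), (Hmat n α ζ τ).re) *
            (Y τ : ℝ)) ∧
    ((∑ α ∈ Finset.univ.filter (fun α => wt n α = i),
        ‖c α‖ ^ 2 / ‖c 0‖ ^ 2) =
      (1 / ((∑ ζ, Y ζ : ℕ) : ℝ) ^ 2) *
        ∑ ζ, ∑ τ, (Y ζ : ℝ) *
          (∑ α ∈ Finset.univ.filter (fun α => wt n α = i), (Hmat n α ζ τ).re) *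
            (Y τ : ℝ)) := by
  classical
  set S := Finset.univ.filter (fun α : ∀ j, ZMod (n j) => wt n α = i) with hS
  have hNC : (∏ j, (n j : ℂ)) = ((∏ j, n j : ℕ) : ℂ) := by push_cast; ring
  set N : ℕ := ∏ j, n j with hN
  have hNpos : 0 < N := Finset.prod_pos fun j _ => hn j
  have hNR : ((N : ℝ)) ≠ 0 := by positivity
  have key : ∀ α, (‖c α‖) ^ 2 = (1 / (N : ℝ) ^ 2) *
      ∑ ζ, ∑ τ, (Y ζ : ℝ) * (Hmat n α ζ τ).re * (Y τ : ℝ) := by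
    intro α
    have h1 : c α * (starRingEnd ℂ) (c α)
        = ((1 / (N : ℝ) ^ 2 : ℝ) : ℂ) *
          ∑ ζ, ∑ τ, ((Y ζ : ℝ) : ℂ) * ((Y τ : ℝ) : ℂ) * Hmat n α ζ τ := by
      rw [hc, hNC]
      rw [map_mul, map_sum]
      simp only [map_mul, map_one, map_div₀, map_natCast, Complex.conj_conj]
      rw [mul_mul_mul_comm, Finset.sum_mul_sum]
      push_cast
      rw [div_mul_div_comm, one_mul, ← sq]
      congr 1
      refine Finset.sum_congr rfl fun ζ _ => Finset.sum_congr rfl fun τ _ => ?_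
      simp only [Hmat, Matrix.of_apply]
      ring
    have h2 : (‖c α‖) ^ 2 = (c α * (starRingEnd ℂ) (c α)).re := by
      rw [Complex.mul_conj, Complex.ofReal_re, Complex.normSq_eq_norm_sq]
    rw [h2, h1, Complex.re_ofReal_mul]
    congr 1
    rw [Complex.re_sum]
    refine Finset.sum_congr rfl fun ζ _ => ?_
    rw [Complex.re_sum]
    refine Finset.sum_congr rfl fun τ _ => ?_
    rw [mul_assoc, Complex.re_ofReal_mul, Complex.re_ofReal_mul]
    ring
  have part1 : (∑ α ∈ S, ‖c α‖ ^ 2) =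
      (1 / (N : ℝ) ^ 2) * ∑ ζ, ∑ τ, (Y ζ : ℝ) *
        (∑ α ∈ S, (Hmat n α ζ τ).re) * (Y τ : ℝ) := by
    calc ∑ α ∈ S, ‖c α‖ ^ 2
        = ∑ α ∈ S, (1 / (N : ℝ) ^ 2) *
            ∑ ζ, ∑ τ, (Y ζ : ℝ) * (Hmat n α ζ τ).re * (Y τ : ℝ) :=
          Finset.sum_congr rfl fun α _ => key α
      _ = (1 / (N : ℝ) ^ 2) *
            ∑ α ∈ S, ∑ ζ, ∑ τ, (Y ζ : ℝ) * (Hmat n α ζ τ).re * (Y τ : ℝ) := by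
          rw [← Finset.mul_sum]
      _ = (1 / (N : ℝ) ^ 2) *
            ∑ ζ, ∑ α ∈ S, ∑ τ, (Y ζ : ℝ) * (Hmat n α ζ τ).re * (Y τ : ℝ) := by
          rw [Finset.sum_comm]
      _ = (1 / (N : ℝ) ^ 2) *
            ∑ ζ, ∑ τ, ∑ α ∈ S, (Y ζ : ℝ) * (Hmat n α ζ τ).re * (Y τ : ℝ) := by
          exact congrArg (fun t => (1 / (N : ℝ) ^ 2) * t)
            (Finset.sum_congr rfl fun ζ _ => Finset.sum_comm)
      _ = (1 / (N : ℝ) ^ 2) * ∑ ζ, ∑ τ, (Y ζ : ℝ) *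
            (∑ α ∈ S, (Hmat n α ζ τ).re) * (Y τ : ℝ) := by
          refine congrArg (fun t => (1 / (N : ℝ) ^ 2) * t)
            (Finset.sum_congr rfl fun ζ _ => Finset.sum_congr rfl fun τ _ => ?_)
          rw [Finset.mul_sum, Finset.sum_mul]
  refine ⟨part1, ?_⟩
  have hX0 : ∀ ζ, Xmon n (0 : ∀ j, ZMod (n j)) ζ = 1 := by
    intro ζ
    unfold Xmon
    refine Finset.prod_eq_one fun j _ => ?_
    simp [ZMod.val_zero]
  set F : ℕ := ∑ ζ, Y ζ with hFdef
  have hFR : ((F : ℝ)) ≠ 0 := by positivity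
  have hc0 : c 0 = ((F : ℝ) / (N : ℝ) : ℝ) := by
    rw [hc, hNC]
    simp only [hX0, map_one, mul_one]
    rw [hFdef]
    push_cast
    ring
  have habs0 : ‖c 0‖ ^ 2 = (F : ℝ) ^ 2 / (N : ℝ) ^ 2 := by
    rw [hc0, Complex.norm_real, Real.norm_eq_abs, abs_of_nonneg (by positivity), div_pow]
  calc ∑ α ∈ S, ‖c α‖ ^ 2 / ‖c 0‖ ^ 2
      = (∑ α ∈ S, ‖c α‖ ^ 2) / ‖c 0‖ ^ 2 := by
        rw [Finset.sum_div]
    _ = ((1 / (N : ℝ) ^ 2) * ∑ ζ, ∑ τ, (Y ζ : ℝ) *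
          (∑ α ∈ S, (Hmat n α ζ τ).re) * (Y τ : ℝ)) / ((F : ℝ) ^ 2 / (N : ℝ) ^ 2) := by
        rw [part1, habs0]
    _ = (1 / (F : ℝ) ^ 2) * ∑ ζ, ∑ τ, (Y ζ : ℝ) *
          (∑ α ∈ S, (Hmat n α ζ τ).re) * (Y τ : ℝ) := by
        field_simp
end

section
/- A fraction F with counting function R = Σ_α c_α X^α factorially projects onto the I-factors (i.e., the projection π_I(F) is a multiple full factorial on the factors in I, with each point appearing the same positive number of times) if and only if c_α = 0 for every nonzero α whose support is contained in I (i.e., α_j = 0 for all j ∉ I and α ≠ 0). -/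
set_option maxHeartbeats 1000000

open Finset

section helpers

variable {N : ℕ} [NeZero N]

lemma exp_eq_std (a b : ZMod N) :
    Complex.exp (2 * Real.pi * Complex.I * ((a.val : ℂ) * (b.val : ℂ)) / N) =
      ZMod.stdAddChar (a * b) := by
  have h : (((a.val * b.val : ℕ) : ℤ) : ZMod N) = a * b := by
    push_cast
    rw [ZMod.natCast_zmod_val, ZMod.natCast_zmod_val]
  rw [← h, ZMod.stdAddChar_coe]
  congr 1
  push_cast
  ring

lemma std_conj (a : ZMod N) :
    (starRingEnd ℂ) (ZMod.stdAddChar a) = ZMod.stdAddChar (-a) := by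
  rw [ZMod.stdAddChar_apply, ZMod.stdAddChar_apply, AddChar.map_neg_eq_inv,
    Circle.coe_inv_eq_conj]

lemma std_ortho (a : ZMod N) :
    ∑ b : ZMod N, (ZMod.stdAddChar (a * b) : ℂ) = if a = 0 then (N : ℂ) else 0 := by
  classical
  have h : ∑ b : ZMod N, (ZMod.stdAddChar (a * b) : ℂ)
      = ∑ b, (ZMod.stdAddChar.mulShift a) b := by
    simp [AddChar.mulShift_apply]
  rw [h, AddChar.sum_eq_ite, ZMod.card]
  by_cases ha : a = 0
  · rw [if_pos ha, if_pos]
    rw [ha, AddChar.mulShift_zero, AddChar.one_eq_zero]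
  · rw [if_neg ha, if_neg]
    intro h0
    exact ZMod.isPrimitive_stdAddChar N ha (by rw [h0]; exact AddChar.one_eq_zero.symm)

end helpers

/-- A fraction factorially projects onto the `I`-factors (the projection is a multiple
full factorial with constant positive multiplicity) if and only if `c_α = 0` for every
nonzero `α` supported on `I`. -/
theorem stmt_15 (m : ℕ) (n : Fin m → ℕ) (hn : ∀ j, 1 ≤ n j) [∀ j, NeZero (n j)]
    (I : Finset (Fin m)) (R : (∀ j, ZMod (n j)) → ℕ) (hF : 0 < ∑ ζ, R ζ)
    (c : (∀ j, ZMod (n j)) → ℂ)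
    (hc : ∀ α, c α = (1 / ∏ j, (n j : ℂ)) *
      ∑ ζ, (R ζ : ℂ) * (starRingEnd ℂ) (Xmon n α ζ)) :
    (∃ lam : ℕ, 0 < lam ∧ ∀ η : ∀ j : I, ZMod (n j.1),
        (∑ ζ ∈ Finset.univ.filter
          (fun ζ : ∀ j, ZMod (n j) => (fun j : I => ζ j.1) = η), R ζ) = lam) ↔
    (∀ α : ∀ j, ZMod (n j), α ≠ 0 → (∀ j, j ∉ I → α j = 0) → c α = 0) := by
  have hXmon : ∀ α ζ : ∀ j, ZMod (n j),
      Xmon n α ζ = ∏ j, (ZMod.stdAddChar (α j * ζ j) : ℂ) := by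
    intro α ζ
    exact Finset.prod_congr rfl fun j _ => exp_eq_std (α j) (ζ j)
  have hXzero : ∀ ζ : ∀ j, ZMod (n j), Xmon n 0 ζ = 1 := by
    intro ζ
    rw [hXmon]
    simp
  -- `Xmon` of a supported exponent only depends on the projection
  have hXsupp : ∀ α : ∀ j, ZMod (n j), (∀ j ∉ I, α j = 0) → ∀ ζ : ∀ j, ZMod (n j),
      Xmon n α ζ = ∏ j : I, (ZMod.stdAddChar (α j.1 * ζ j.1) : ℂ) := by
    intro α hα ζ
    rw [hXmon, Finset.prod_coe_sort I (fun j => (ZMod.stdAddChar (α j * ζ j) : ℂ))]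
    symm
    apply Finset.prod_subset (Finset.subset_univ I)
    intro j _ hj
    rw [hα j hj, zero_mul, AddChar.map_zero_eq_one]
  -- orthogonality on the projected group
  have key : ∀ d : ∀ j : I, ZMod (n j.1),
      ∑ β : ∀ j : I, ZMod (n j.1), ∏ j : I, (ZMod.stdAddChar (β j * d j) : ℂ)
        = if d = 0 then (∏ j : I, (n j.1 : ℂ)) else 0 := by
    intro d
    rw [← Fintype.prod_sum (fun (j : I) (b : ZMod (n j.1)) => (ZMod.stdAddChar (b * d j) : ℂ))]
    have h1 : ∀ j : I, ∑ b : ZMod (n j.1), (ZMod.stdAddChar (b * d j) : ℂ)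
        = if d j = 0 then (n j.1 : ℂ) else 0 := by
      intro j
      rw [← std_ortho (d j)]
      exact Finset.sum_congr rfl fun b _ => by rw [mul_comm]
    rw [Finset.prod_congr rfl fun j _ => h1 j]
    by_cases hd : d = 0
    · rw [if_pos hd]
      refine Finset.prod_congr rfl fun j _ => ?_
      rw [if_pos (by rw [hd]; rfl)]
    · rw [if_neg hd]
      obtain ⟨j, hj⟩ : ∃ j : I, d j ≠ 0 := by
        by_contra h
        push_neg at h
        exact hd (funext h)
      exact Finset.prod_eq_zero (Finset.mem_univ j) (if_neg hj)
  -- conjugation/product identity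
  have hconjmul : ∀ (β ξ η : ∀ j : I, ZMod (n j.1)),
      (starRingEnd ℂ) (∏ j : I, (ZMod.stdAddChar (β j * ξ j) : ℂ)) *
        ∏ j : I, (ZMod.stdAddChar (β j * η j) : ℂ)
      = ∏ j : I, (ZMod.stdAddChar (β j * (η j - ξ j)) : ℂ) := by
    intro β ξ η
    rw [map_prod, ← Finset.prod_mul_distrib]
    refine Finset.prod_congr rfl fun j _ => ?_
    rw [std_conj, ← AddChar.map_add_eq_mul]
    congr 1
    ring
  -- the fiber-counting function of the projection
  set S : (∀ j : I, ZMod (n j.1)) → ℕ := fun η => ∑ ζ ∈ Finset.univ.filter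
      (fun ζ : ∀ j, ZMod (n j) => (fun j : I => ζ j.1) = η), R ζ with hSdef
  have hfib : ∀ f : (∀ j, ZMod (n j)) → ℂ,
      ∑ η : ∀ j : I, ZMod (n j.1), ∑ ζ ∈ Finset.univ.filter
        (fun ζ : ∀ j, ZMod (n j) => (fun j : I => ζ j.1) = η), f ζ = ∑ ζ, f ζ := by
    intro f
    apply Finset.sum_fiberwise
  constructor
  · -- projection constant ⇒ coefficients vanish
    rintro ⟨lam, hlam0, hconst⟩ α hα hsupp
    rw [hc α]
    have hzero : ∑ ζ, (R ζ : ℂ) * (starRingEnd ℂ) (Xmon n α ζ) = 0 := by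
      set α' : ∀ j : I, ZMod (n j.1) := fun j => α j.1 with hα'
      have hα'ne : α' ≠ 0 := by
        obtain ⟨j, hj⟩ := Function.ne_iff.mp hα
        have hjI : j ∈ I := by
          by_contra hjn
          exact hj (hsupp j hjn)
        intro h
        exact hj (by simpa [hα'] using congrFun h ⟨j, hjI⟩)
      calc ∑ ζ, (R ζ : ℂ) * (starRingEnd ℂ) (Xmon n α ζ)
          = ∑ η : ∀ j : I, ZMod (n j.1), ∑ ζ ∈ Finset.univ.filter
              (fun ζ : ∀ j, ZMod (n j) => (fun j : I => ζ j.1) = η),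
              (R ζ : ℂ) * (starRingEnd ℂ) (Xmon n α ζ) :=
            (hfib _).symm
        _ = ∑ η : ∀ j : I, ZMod (n j.1),
              (lam : ℂ) * (starRingEnd ℂ) (∏ j : I, (ZMod.stdAddChar (α' j * η j) : ℂ)) := by
            refine Finset.sum_congr rfl fun η _ => ?_
            have hstep : ∀ ζ ∈ Finset.univ.filter
                (fun ζ : ∀ j, ZMod (n j) => (fun j : I => ζ j.1) = η),
                (R ζ : ℂ) * (starRingEnd ℂ) (Xmon n α ζ)
                  = (R ζ : ℂ) * (starRingEnd ℂ)
                    (∏ j : I, (ZMod.stdAddChar (α' j * η j) : ℂ)) := by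
              intro ζ hζ
              have hζI := (Finset.mem_filter.mp hζ).2
              rw [hXsupp α hsupp ζ]
              congr 2
              refine Finset.prod_congr rfl fun j _ => ?_
              rw [hα', ← congrFun hζI j]
            rw [Finset.sum_congr rfl hstep, ← Finset.sum_mul]
            have : ((∑ ζ ∈ Finset.univ.filter
                (fun ζ : ∀ j, ZMod (n j) => (fun j : I => ζ j.1) = η), R ζ : ℕ) : ℂ)
                = (lam : ℂ) := by
              rw [hconst η]
            rw [← this]
            push_cast
            ring
        _ = (lam : ℂ) * (starRingEnd ℂ)
              (∑ η : ∀ j : I, ZMod (n j.1), ∏ j : I, (ZMod.stdAddChar (α' j * η j) : ℂ)) := by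
            rw [← Finset.mul_sum, map_sum]
        _ = 0 := by
            have : ∑ η : ∀ j : I, ZMod (n j.1), ∏ j : I, (ZMod.stdAddChar (α' j * η j) : ℂ)
                = 0 := by
              have hcomm : ∀ η : ∀ j : I, ZMod (n j.1),
                  ∏ j : I, (ZMod.stdAddChar (α' j * η j) : ℂ)
                    = ∏ j : I, (ZMod.stdAddChar (η j * α' j) : ℂ) := by
                intro η
                exact Finset.prod_congr rfl fun j _ => by rw [mul_comm]
              rw [Finset.sum_congr rfl fun η _ => hcomm η, key α', if_neg hα'ne]
            rw [this, map_zero, mul_zero]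
    rw [hzero, mul_zero]
  · -- coefficients vanish ⇒ projection constant
    intro hv
    classical
    set Nt : ℂ := ∏ j, (n j : ℂ) with hNt
    set Np : ℂ := ∏ j : I, (n j.1 : ℂ) with hNp
    have hNtne : Nt ≠ 0 := by
      rw [hNt]
      exact Finset.prod_ne_zero_iff.mpr fun j _ =>
        Nat.cast_ne_zero.mpr (Nat.one_le_iff_ne_zero.mp (hn j))
    have hNpne : Np ≠ 0 := by
      rw [hNp]
      exact Finset.prod_ne_zero_iff.mpr fun j _ =>
        Nat.cast_ne_zero.mpr (Nat.one_le_iff_ne_zero.mp (hn j.1))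
    -- extension by zero
    set ext : (∀ j : I, ZMod (n j.1)) → (∀ j, ZMod (n j)) :=
      fun β j => if h : j ∈ I then β ⟨j, h⟩ else 0 with hext
    have hext_supp : ∀ β, ∀ j ∉ I, ext β j = 0 := fun β j hj => dif_neg hj
    have hext_I : ∀ (β : ∀ j : I, ZMod (n j.1)) (j : I), ext β j.1 = β j := by
      intro β j
      show (if h : j.1 ∈ I then β ⟨j.1, h⟩ else 0) = β j
      rw [dif_pos j.2]
    have hext0 : ext 0 = 0 := by
      funext j
      simp only [hext]
      split <;> rfl
    have hextne : ∀ β, β ≠ 0 → ext β ≠ 0 := by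
      intro β hβ h
      apply hβ
      funext j
      have := congrFun h j.1
      rwa [hext_I] at this
    have hXβ : ∀ (β : ∀ j : I, ZMod (n j.1)) (ζ : ∀ j, ZMod (n j)),
        Xmon n (ext β) ζ = ∏ j : I, (ZMod.stdAddChar (β j * ζ j.1) : ℂ) := by
      intro β ζ
      rw [hXsupp (ext β) (hext_supp β) ζ]
      exact Finset.prod_congr rfl fun j _ => by rw [hext_I]
    have hc0 : c 0 = (1 / Nt) * ∑ ζ, (R ζ : ℂ) := by
      rw [hc 0]
      congr 1
      refine Finset.sum_congr rfl fun ζ _ => ?_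
      rw [hXzero ζ, map_one, mul_one]
    -- inversion: compute the same sum two ways
    have hS_eq : ∀ η : ∀ j : I, ZMod (n j.1), Np * (S η : ℂ) = ∑ ζ, (R ζ : ℂ) := by
      intro η
      have way1 : ∑ β : ∀ j : I, ZMod (n j.1),
          c (ext β) * ∏ j : I, (ZMod.stdAddChar (β j * η j) : ℂ) = c 0 := by
        rw [Finset.sum_eq_single 0]
        · rw [hext0]
          have : ∏ j : I, (ZMod.stdAddChar ((0 : ∀ j : I, ZMod (n j.1)) j * η j) : ℂ) = 1 := by
            refine Finset.prod_eq_one fun j _ => ?_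
            show (ZMod.stdAddChar (0 * η j) : ℂ) = 1
            rw [zero_mul, AddChar.map_zero_eq_one]
          rw [this, mul_one]
        · intro β _ hβ
          rw [hv (ext β) (hextne β hβ) (hext_supp β), zero_mul]
        · intro h
          exact absurd (Finset.mem_univ 0) h
      have way2 : ∑ β : ∀ j : I, ZMod (n j.1),
          c (ext β) * ∏ j : I, (ZMod.stdAddChar (β j * η j) : ℂ)
          = (1 / Nt) * (Np * (S η : ℂ)) := by
        calc ∑ β : ∀ j : I, ZMod (n j.1),
              c (ext β) * ∏ j : I, (ZMod.stdAddChar (β j * η j) : ℂ)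
            = ∑ β : ∀ j : I, ZMod (n j.1), (1 / Nt) *
                ∑ ζ, (R ζ : ℂ) * (starRingEnd ℂ)
                    (∏ j : I, (ZMod.stdAddChar (β j * ζ j.1) : ℂ)) *
                  ∏ j : I, (ZMod.stdAddChar (β j * η j) : ℂ) := by
              refine Finset.sum_congr rfl fun β _ => ?_
              rw [hc (ext β), mul_assoc, Finset.sum_mul]
              congr 1
              exact Finset.sum_congr rfl fun ζ _ => by rw [hXβ β ζ]
          _ = (1 / Nt) * ∑ ζ, (R ζ : ℂ) *
                ∑ β : ∀ j : I, ZMod (n j.1),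
                  (starRingEnd ℂ) (∏ j : I, (ZMod.stdAddChar (β j * ζ j.1) : ℂ)) *
                    ∏ j : I, (ZMod.stdAddChar (β j * η j) : ℂ) := by
              rw [← Finset.mul_sum, Finset.sum_comm]
              congr 1
              refine Finset.sum_congr rfl fun ζ _ => ?_
              rw [Finset.mul_sum]
              exact Finset.sum_congr rfl fun β _ => by ring
          _ = (1 / Nt) * ∑ ζ, (R ζ : ℂ) *
                (if (fun j : I => ζ j.1) = η then Np else 0) := by
              congr 1
              refine Finset.sum_congr rfl fun ζ _ => ?_
              congr 1
              rw [Finset.sum_congr rfl fun β _ => hconjmul β (fun j : I => ζ j.1) η]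
              have h3 := key (η - fun j : I => ζ j.1)
              simp only [Pi.sub_apply] at h3
              rw [h3]
              have hiff : (η - fun j : I => ζ j.1) = 0 ↔ (fun j : I => ζ j.1) = η := by
                rw [sub_eq_zero, eq_comm]
              rw [if_congr hiff rfl rfl]
          _ = (1 / Nt) * (Np * (S η : ℂ)) := by
              congr 1
              simp_rw [mul_ite, mul_zero]
              rw [← Finset.sum_filter]
              rw [hSdef]
              push_cast
              rw [← Finset.sum_mul]
              ring
      rw [way1, hc0] at way2
      exact mul_left_cancel₀ (by simpa using hNtne) way2.symm
    -- conclude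
    have hSc : ∀ η, S η = S 0 := by
      intro η
      have h1 : Np * (S η : ℂ) = Np * (S 0 : ℂ) := by rw [hS_eq, hS_eq]
      exact_mod_cast mul_left_cancel₀ hNpne h1
    refine ⟨S 0, ?_, fun η => hSc η⟩
    rcases Nat.eq_zero_or_pos (S 0) with h0 | h0
    · exfalso
      have hsum : ∑ η : ∀ j : I, ZMod (n j.1), S η = ∑ ζ, R ζ := by
        rw [hSdef]
        apply Finset.sum_fiberwise
      rw [Finset.sum_congr rfl fun η _ => (hSc η).trans h0] at hsum
      simp at hsum
      omega
    · exact h0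
end

section
/- A fraction F is an orthogonal array of strength t (i.e., it factorially projects onto every set of t factors) if and only if all coefficients c_α of its counting function with 1 ≤ ‖α‖_0 ≤ t are zero. -/
open Finset

/-- A fraction is an orthogonal array of strength `t` (it factorially projects onto
every set of `t` factors) if and only if all coefficients `c_α` with
`1 ≤ ‖α‖₀ ≤ t` vanish.  Projecting onto `I` is assumed (as in the context) to be
equivalent to the vanishing of `c_α` for all nonzero `α` supported on `I`. -/
theorem stmt_16 (m : ℕ) (n : Fin m → ℕ) (hn : ∀ j, 1 ≤ n j) [∀ j, NeZero (n j)]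
    (R : (∀ j, ZMod (n j)) → ℕ) (c : (∀ j, ZMod (n j)) → ℂ)
    (hc : ∀ α, c α = (1 / ∏ j, (n j : ℂ)) *
      ∑ ζ, (R ζ : ℂ) * (starRingEnd ℂ) (Xmon n α ζ))
    (t : ℕ) (ht : t ≤ m)
    (projects : Finset (Fin m) → Prop)
    (hproj : ∀ I, projects I ↔
      ∀ α : ∀ j, ZMod (n j), α ≠ 0 → (∀ j, j ∉ I → α j = 0) → c α = 0) :
    (∀ I : Finset (Fin m), I.card = t → projects I) ↔
      (∀ α, 1 ≤ wt n α → wt n α ≤ t → c α = 0) := by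
  constructor
  · intro h α h1 h2
    set s := Finset.univ.filter fun j => α j ≠ 0 with hs
    obtain ⟨I, hsI, _, hI⟩ := Finset.exists_subsuperset_card_eq (s.subset_univ) h2
      (by simpa using ht)
    have hα : α ≠ 0 := by
      intro h0
      simp [hs, h0, wt] at h1
    exact (hproj I).mp (h I hI) α hα (fun j hj => by
      by_contra hne
      exact hj (hsI (by simp [hs, hne])))
  · intro h I hI
    rw [hproj]
    intro α hα hsupp
    have h1 : 1 ≤ wt n α := by
      rw [Nat.one_le_iff_ne_zero]
      intro h0
      apply hα
      funext j
      show α j = 0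
      by_contra hne
      have : j ∈ Finset.univ.filter fun j => α j ≠ 0 := by simp [hne]
      simp [wt, Finset.card_eq_zero] at h0
      exact hne (@h0 j)
    have h2 : wt n α ≤ t := by
      rw [← hI]
      apply Finset.card_le_card
      intro j hj
      simp at hj
      by_contra hnI
      exact hj (hsupp j hnI)
    exact h α h1 h2
end
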